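/- Suppose the equation w_{n+1} = e^{-Λ}A_n w_n has an exponential dichotomy on ℤ for every Λ in an open interval (a,b) (a resolvent interval). Then the dichotomy projectors are constant on (a,b): if (P_n^s(Λ₁)) and (P_n^s(Λ₂)) are the dichotomy projector families for Λ₁, Λ₂ ∈ (a,b), then P_n^s(Λ₁) = P_n^s(Λ₂) for all n ∈ ℤ. -/

import Mathlib

open Matrix

noncomputable def euclNorm {d : ℕ} (v : Fin d → ℝ) : ℝ := Real.sqrt (∑ i, v i ^ 2)
lemma euclNorm_nonneg {d : ℕ} (v : Fin d → ℝ) : 0 ≤ euclNorm v := Real.sqrt_nonneg _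

lemma euclNorm_eq_zero {d : ℕ} {v : Fin d → ℝ} (h : euclNorm v ≤ 0) : v = 0 := by
  have h0 : euclNorm v = 0 := le_antisymm h (euclNorm_nonneg v)
  have hs : ∑ i, v i ^ 2 ≤ 0 := Real.sqrt_eq_zero'.mp h0
  have hs' : ∑ i, v i ^ 2 = 0 :=
    le_antisymm hs (Finset.sum_nonneg fun i _ => sq_nonneg _)
  funext i
  have := (Finset.sum_eq_zero_iff_of_nonneg (fun i _ => sq_nonneg (v i))).mp hs' i (Finset.mem_univ i)
  exact pow_eq_zero_iff (by norm_num) |>.mp this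

lemma euclNorm_smul {d : ℕ} (c : ℝ) (v : Fin d → ℝ) :
    euclNorm (c • v) = |c| * euclNorm v := by
  unfold euclNorm
  have : ∑ i, (c • v) i ^ 2 = c ^ 2 * ∑ i, v i ^ 2 := by
    rw [Finset.mul_sum]; exact Finset.sum_congr rfl fun i _ => by simp [mul_pow]
  rw [this, Real.sqrt_mul (sq_nonneg c), Real.sqrt_sq_eq_abs]

lemma limit_le {α C c : ℝ} (hα : 0 < α) (h : ∀ j : ℕ, c ≤ C * Real.exp (-(α * j))) : c ≤ 0 := by
  have h1 : Filter.Tendsto (fun j : ℕ => C * Real.exp (-(α * j))) Filter.atTop (nhds 0) := by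
    rw [show (0:ℝ) = C * 0 by ring]
    refine Filter.Tendsto.const_mul C ?_
    apply Real.tendsto_exp_atBot.comp
    apply Filter.tendsto_neg_atBot_iff.mpr
    exact (tendsto_natCast_atTop_atTop (R := ℝ)).const_mul_atTop hα
  exact ge_of_tendsto' h1 h

lemma mulVec_ext {d : ℕ} {M N : Matrix (Fin d) (Fin d) ℝ}
    (h : ∀ v, M *ᵥ v = N *ᵥ v) : M = N := by
  ext i j
  have := congrFun (h (Pi.single j 1)) i
  simpa [Matrix.mulVec_single] using this

lemma cocycle_of_step {d : ℕ} (A : ℤ → Matrix (Fin d) (Fin d) ℝ) (hA : ∀ n, IsUnit (A n))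
    (Φ : ℤ → ℤ → Matrix (Fin d) (Fin d) ℝ)
    (hId : ∀ n, Φ n n = 1) (hstep : ∀ n m, Φ (n + 1) m = A n * Φ n m) :
    ∀ n m k, Φ n m * Φ m k = Φ n k := by
  intro n m k
  have main : ∀ j : ℤ, Φ (m + j) m * Φ m k = Φ (m + j) k := by
    intro j
    induction j using Int.induction_on with
    | zero => simp [hId]
    | succ i ih =>
        have e1 : m + ((i : ℤ) + 1) = (m + i) + 1 := by ring
        rw [e1, hstep, hstep, mul_assoc, ih]
    | pred i ih =>
        have e1 : m + (-(i : ℤ) - 1) + 1 = m + (-(i : ℤ)) := by ring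
        apply (hA (m + (-(i : ℤ) - 1))).mul_right_injective
        have h2 := hstep (m + (-(i : ℤ) - 1)) m
        have h3 := hstep (m + (-(i : ℤ) - 1)) k
        rw [e1] at h2 h3
        simp only [← mul_assoc, ← h2, ← h3, ih]
  have := main (n - m)
  simpa using this

def IsED {d : ℕ} (Φ : ℤ → ℤ → Matrix (Fin d) (Fin d) ℝ)
    (K αs αu : ℝ) (Ps : ℤ → Matrix (Fin d) (Fin d) ℝ) : Prop :=
  0 < K ∧ 0 < αs ∧ 0 < αu ∧
  (∀ n, Ps n * Ps n = Ps n) ∧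
  (∀ n m, Ps n * Φ n m = Φ n m * Ps m) ∧
  (∀ n m : ℤ, m ≤ n → ∀ v : Fin d → ℝ,
    euclNorm (Φ n m *ᵥ Ps m *ᵥ v) ≤ K * Real.exp (-αs * ((n : ℝ) - (m : ℝ))) * euclNorm v) ∧
  (∀ n m : ℤ, m ≤ n → ∀ v : Fin d → ℝ,
    euclNorm (Φ m n *ᵥ (1 - Ps n) *ᵥ v) ≤ K * Real.exp (-αu * ((n : ℝ) - (m : ℝ))) * euclNorm v)

lemma mem_stable_iff {d : ℕ} (M : ℤ → ℤ → Matrix (Fin d) (Fin d) ℝ)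
    (hco : ∀ n m k, M n m * M m k = M n k) (hIdM : ∀ n, M n n = 1)
    {K αs αu : ℝ} {Ps : ℤ → Matrix (Fin d) (Fin d) ℝ}
    (h : IsED M K αs αu Ps) (n : ℤ) (v : Fin d → ℝ) :
    Ps n *ᵥ v = v ↔ ∃ C, ∀ k, n ≤ k → euclNorm (M k n *ᵥ v) ≤ C := by
  obtain ⟨hK, hαs, hαu, hidem, hcomm, hstab, hunst⟩ := h
  constructor
  · intro hv
    refine ⟨K * euclNorm v, fun k hk => ?_⟩
    have est := hstab k n hk v
    rw [hv] at est
    have hkn : (0:ℝ) ≤ (k:ℝ) - (n:ℝ) := sub_nonneg.mpr (by exact_mod_cast hk)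
    calc euclNorm (M k n *ᵥ v) ≤ K * Real.exp (-αs * ((k:ℝ) - n)) * euclNorm v := est
      _ ≤ K * 1 * euclNorm v := by
          refine mul_le_mul_of_nonneg_right (mul_le_mul_of_nonneg_left ?_ hK.le) (euclNorm_nonneg v)
          rw [Real.exp_le_one_iff]; nlinarith
      _ = K * euclNorm v := by ring
  · rintro ⟨C, hC⟩
    have key : ∀ j : ℕ, euclNorm (v - Ps n *ᵥ v) ≤ (K * C) * Real.exp (-(αu * j)) := by
      intro j
      set k := n + (j : ℤ) with hkdef
      have hk : n ≤ k := by simp [hkdef]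
      have hcm : (1 - Ps k) * M k n = M k n * (1 - Ps n) := by
        simp [sub_mul, mul_sub, hcomm k n]
      have eq1 : v - Ps n *ᵥ v = M n k *ᵥ ((1 - Ps k) *ᵥ (M k n *ᵥ v)) := by
        simp only [Matrix.mulVec_mulVec]
        rw [hcm, ← mul_assoc, hco n k n, hIdM, one_mul, Matrix.sub_mulVec, Matrix.one_mulVec]
      have est := hunst k n hk (M k n *ᵥ v)
      rw [← eq1] at est
      have hcast : ((k:ℝ) - (n:ℝ)) = (j:ℝ) := by rw [hkdef]; push_cast; ring
      rw [hcast] at est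
      have h2 := mul_le_mul_of_nonneg_left (hC k hk)
        (by positivity : (0:ℝ) ≤ K * Real.exp (-αu * (j:ℝ)))
      calc euclNorm (v - Ps n *ᵥ v)
          ≤ K * Real.exp (-αu * (j:ℝ)) * euclNorm (M k n *ᵥ v) := est
        _ ≤ K * Real.exp (-αu * (j:ℝ)) * C := h2
        _ = K * C * Real.exp (-(αu * (j:ℝ))) := by rw [neg_mul]; ring
    have h0 : v - Ps n *ᵥ v = 0 := euclNorm_eq_zero (limit_le hαu key)
    exact (sub_eq_zero.mp h0).symm

lemma mem_unstable_iff {d : ℕ} (M : ℤ → ℤ → Matrix (Fin d) (Fin d) ℝ)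
    (hco : ∀ n m k, M n m * M m k = M n k) (hIdM : ∀ n, M n n = 1)
    {K αs αu : ℝ} {Ps : ℤ → Matrix (Fin d) (Fin d) ℝ}
    (h : IsED M K αs αu Ps) (n : ℤ) (v : Fin d → ℝ) :
    Ps n *ᵥ v = 0 ↔ ∃ C, ∀ k, k ≤ n → euclNorm (M k n *ᵥ v) ≤ C := by
  obtain ⟨hK, hαs, hαu, hidem, hcomm, hstab, hunst⟩ := h
  constructor
  · intro hv
    refine ⟨K * euclNorm v, fun k hk => ?_⟩
    have hone : (1 - Ps n) *ᵥ v = v := by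
      rw [Matrix.sub_mulVec, Matrix.one_mulVec, hv, sub_zero]
    have est := hunst n k hk v
    rw [hone] at est
    have hkn : (0:ℝ) ≤ (n:ℝ) - (k:ℝ) := sub_nonneg.mpr (by exact_mod_cast hk)
    calc euclNorm (M k n *ᵥ v) ≤ K * Real.exp (-αu * ((n:ℝ) - k)) * euclNorm v := est
      _ ≤ K * 1 * euclNorm v := by
          refine mul_le_mul_of_nonneg_right (mul_le_mul_of_nonneg_left ?_ hK.le) (euclNorm_nonneg v)
          rw [Real.exp_le_one_iff]; nlinarith
      _ = K * euclNorm v := by ring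
  · rintro ⟨C, hC⟩
    have key : ∀ j : ℕ, euclNorm (Ps n *ᵥ v) ≤ (K * C) * Real.exp (-(αs * j)) := by
      intro j
      set k := n - (j : ℤ) with hkdef
      have hk : k ≤ n := by simp [hkdef]
      have eq1 : Ps n *ᵥ v = M n k *ᵥ (Ps k *ᵥ (M k n *ᵥ v)) := by
        simp only [Matrix.mulVec_mulVec]
        rw [hcomm k n, ← mul_assoc, hco n k n, hIdM, one_mul]
      have est := hstab n k hk (M k n *ᵥ v)
      rw [← eq1] at est
      have hcast : ((n:ℝ) - (k:ℝ)) = (j:ℝ) := by rw [hkdef]; push_cast; ring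
      rw [hcast] at est
      have h2 := mul_le_mul_of_nonneg_left (hC k hk)
        (by positivity : (0:ℝ) ≤ K * Real.exp (-αs * (j:ℝ)))
      calc euclNorm (Ps n *ᵥ v)
          ≤ K * Real.exp (-αs * (j:ℝ)) * euclNorm (M k n *ᵥ v) := est
        _ ≤ K * Real.exp (-αs * (j:ℝ)) * C := h2
        _ = K * C * Real.exp (-(αs * (j:ℝ))) := by rw [neg_mul]; ring
    exact euclNorm_eq_zero (limit_le hαs key)

lemma IsED_mono {d : ℕ} {M : ℤ → ℤ → Matrix (Fin d) (Fin d) ℝ}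
    {K αs αu β : ℝ} {Ps : ℤ → Matrix (Fin d) (Fin d) ℝ}
    (h : IsED M K αs αu Ps) (hb : 0 < β) (h1 : β ≤ αs) (h2 : β ≤ αu) :
    IsED M K β β Ps := by
  obtain ⟨hK, hαs, hαu, hidem, hcomm, hstab, hunst⟩ := h
  refine ⟨hK, hb, hb, hidem, hcomm, fun n m hm v => ?_, fun n m hm v => ?_⟩
  · refine (hstab n m hm v).trans ?_
    have hd : (0:ℝ) ≤ (n:ℝ) - (m:ℝ) := sub_nonneg.mpr (by exact_mod_cast hm)
    refine mul_le_mul_of_nonneg_right (mul_le_mul_of_nonneg_left ?_ hK.le) (euclNorm_nonneg v)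
    exact Real.exp_le_exp.mpr (by nlinarith)
  · refine (hunst n m hm v).trans ?_
    have hd : (0:ℝ) ≤ (n:ℝ) - (m:ℝ) := sub_nonneg.mpr (by exact_mod_cast hm)
    refine mul_le_mul_of_nonneg_right (mul_le_mul_of_nonneg_left ?_ hK.le) (euclNorm_nonneg v)
    exact Real.exp_le_exp.mpr (by nlinarith)

lemma scaled_cocycle {d : ℕ} (Φ : ℤ → ℤ → Matrix (Fin d) (Fin d) ℝ)
    (hco : ∀ n m k, Φ n m * Φ m k = Φ n k) (Λ : ℝ) (n m k : ℤ) :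
    (Real.exp (-Λ * ((n:ℝ) - (m:ℝ))) • Φ n m) * (Real.exp (-Λ * ((m:ℝ) - (k:ℝ))) • Φ m k)
      = Real.exp (-Λ * ((n:ℝ) - (k:ℝ))) • Φ n k := by
  rw [smul_mul_assoc, mul_smul_comm, smul_smul, ← Real.exp_add, hco]
  congr 2
  ring

lemma norm_scaled_pair {d : ℕ} (Φ : ℤ → ℤ → Matrix (Fin d) (Fin d) ℝ) (Λ Λ' : ℝ)
    (k n : ℤ) (v : Fin d → ℝ) :
    euclNorm ((Real.exp (-Λ' * ((k:ℝ) - (n:ℝ))) • Φ k n) *ᵥ v)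
      = Real.exp ((Λ - Λ') * ((k:ℝ) - (n:ℝ)))
          * euclNorm ((Real.exp (-Λ * ((k:ℝ) - (n:ℝ))) • Φ k n) *ᵥ v) := by
  rw [Matrix.smul_mulVec, Matrix.smul_mulVec, euclNorm_smul, euclNorm_smul,
      abs_of_pos (Real.exp_pos _), abs_of_pos (Real.exp_pos _), ← mul_assoc, ← Real.exp_add]
  congr 2
  ring

lemma keyAux {d : ℕ} (Φ : ℤ → ℤ → Matrix (Fin d) (Fin d) ℝ)
    (hco : ∀ n m k, Φ n m * Φ m k = Φ n k) (hId : ∀ n, Φ n n = 1)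
    (Λ₁ Λ₂ K₁ αs₁ αu₁ K₂ αs₂ αu₂ : ℝ)
    (Ps₁ Ps₂ : ℤ → Matrix (Fin d) (Fin d) ℝ)
    (hle : Λ₁ ≤ Λ₂) (hgap : Λ₂ - Λ₁ ≤ αu₁ ∨ Λ₂ - Λ₁ ≤ αs₂)
    (hED₁ : IsED (fun (n m : ℤ) => Real.exp (-Λ₁ * ((n : ℝ) - (m : ℝ))) • Φ n m) K₁ αs₁ αu₁ Ps₁)
    (hED₂ : IsED (fun (n m : ℤ) => Real.exp (-Λ₂ * ((n : ℝ) - (m : ℝ))) • Φ n m) K₂ αs₂ αu₂ Ps₂) :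
    ∀ n : ℤ, Ps₁ n = Ps₂ n := by
  have hco₁ : ∀ n m k : ℤ,
      (fun (n m : ℤ) => Real.exp (-Λ₁ * ((n : ℝ) - (m : ℝ))) • Φ n m) n m *
        (fun (n m : ℤ) => Real.exp (-Λ₁ * ((n : ℝ) - (m : ℝ))) • Φ n m) m k
        = (fun (n m : ℤ) => Real.exp (-Λ₁ * ((n : ℝ) - (m : ℝ))) • Φ n m) n k :=
    fun n m k => scaled_cocycle Φ hco Λ₁ n m k
  have hco₂ : ∀ n m k : ℤ,
      (fun (n m : ℤ) => Real.exp (-Λ₂ * ((n : ℝ) - (m : ℝ))) • Φ n m) n m *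
        (fun (n m : ℤ) => Real.exp (-Λ₂ * ((n : ℝ) - (m : ℝ))) • Φ n m) m k
        = (fun (n m : ℤ) => Real.exp (-Λ₂ * ((n : ℝ) - (m : ℝ))) • Φ n m) n k :=
    fun n m k => scaled_cocycle Φ hco Λ₂ n m k
  have hId₁ : ∀ n : ℤ, (fun (n m : ℤ) => Real.exp (-Λ₁ * ((n : ℝ) - (m : ℝ))) • Φ n m) n n = 1 :=
    fun n => by simp [hId]
  have hId₂ : ∀ n : ℤ, (fun (n m : ℤ) => Real.exp (-Λ₂ * ((n : ℝ) - (m : ℝ))) • Φ n m) n n = 1 :=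
    fun n => by simp [hId]
  have hK₁ : 0 < K₁ := hED₁.1
  have hK₂ : 0 < K₂ := hED₂.1
  -- S₁ ⊆ S₂
  have S1 : ∀ n v, Ps₁ n *ᵥ v = v → Ps₂ n *ᵥ v = v := by
    intro n v hv
    obtain ⟨C, hC⟩ := (mem_stable_iff _ hco₁ hId₁ hED₁ n v).mp hv
    refine (mem_stable_iff _ hco₂ hId₂ hED₂ n v).mpr ⟨C, fun k hk => ?_⟩
    show euclNorm ((Real.exp (-Λ₂ * ((k:ℝ) - (n:ℝ))) • Φ k n) *ᵥ v) ≤ C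
    rw [norm_scaled_pair Φ Λ₁ Λ₂ k n v]
    have hkn : (0:ℝ) ≤ (k:ℝ) - (n:ℝ) := sub_nonneg.mpr (by exact_mod_cast hk)
    have hexp : Real.exp ((Λ₁ - Λ₂) * ((k:ℝ) - (n:ℝ))) ≤ 1 := by
      rw [Real.exp_le_one_iff]; nlinarith
    have hCnn : 0 ≤ C := le_trans (euclNorm_nonneg _) (hC n le_rfl)
    calc Real.exp ((Λ₁ - Λ₂) * ((k:ℝ) - (n:ℝ)))
          * euclNorm ((Real.exp (-Λ₁ * ((k:ℝ) - (n:ℝ))) • Φ k n) *ᵥ v)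
        ≤ 1 * C := mul_le_mul hexp (hC k hk) (euclNorm_nonneg _) one_pos.le
      _ = C := one_mul C
  -- U₂ ⊆ U₁
  have U2 : ∀ n v, Ps₂ n *ᵥ v = 0 → Ps₁ n *ᵥ v = 0 := by
    intro n v hv
    obtain ⟨C, hC⟩ := (mem_unstable_iff _ hco₂ hId₂ hED₂ n v).mp hv
    refine (mem_unstable_iff _ hco₁ hId₁ hED₁ n v).mpr ⟨C, fun k hk => ?_⟩
    show euclNorm ((Real.exp (-Λ₁ * ((k:ℝ) - (n:ℝ))) • Φ k n) *ᵥ v) ≤ C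
    rw [norm_scaled_pair Φ Λ₂ Λ₁ k n v]
    have hkn : (k:ℝ) - (n:ℝ) ≤ 0 := sub_nonpos.mpr (by exact_mod_cast hk)
    have hexp : Real.exp ((Λ₂ - Λ₁) * ((k:ℝ) - (n:ℝ))) ≤ 1 := by
      rw [Real.exp_le_one_iff]; nlinarith
    have hCnn : 0 ≤ C := le_trans (euclNorm_nonneg _) (hC n le_rfl)
    calc Real.exp ((Λ₂ - Λ₁) * ((k:ℝ) - (n:ℝ)))
          * euclNorm ((Real.exp (-Λ₂ * ((k:ℝ) - (n:ℝ))) • Φ k n) *ᵥ v)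
        ≤ 1 * C := mul_le_mul hexp (hC k hk) (euclNorm_nonneg _) one_pos.le
      _ = C := one_mul C
  -- U₁ ⊆ U₂ (in both gap cases)
  have U1 : ∀ n v, Ps₁ n *ᵥ v = 0 → Ps₂ n *ᵥ v = 0 := by
    rcases hgap with hgap | hgap
    · -- direct, using the unstable decay of system 1
      intro n v hv
      refine (mem_unstable_iff _ hco₂ hId₂ hED₂ n v).mpr ⟨K₁ * euclNorm v, fun k hk => ?_⟩
      have hone : (1 - Ps₁ n) *ᵥ v = v := by
        rw [Matrix.sub_mulVec, Matrix.one_mulVec, hv, sub_zero]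
      have est := hED₁.2.2.2.2.2.2 n k hk v
      rw [hone] at est
      show euclNorm ((Real.exp (-Λ₂ * ((k:ℝ) - (n:ℝ))) • Φ k n) *ᵥ v) ≤ K₁ * euclNorm v
      rw [norm_scaled_pair Φ Λ₁ Λ₂ k n v]
      have hkn : (k:ℝ) - (n:ℝ) ≤ 0 := sub_nonpos.mpr (by exact_mod_cast hk)
      have hprod : Real.exp ((Λ₁ - Λ₂) * ((k:ℝ) - (n:ℝ)))
          * Real.exp (-αu₁ * ((n:ℝ) - (k:ℝ))) ≤ 1 := by
        rw [← Real.exp_add, Real.exp_le_one_iff]; nlinarith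
      calc Real.exp ((Λ₁ - Λ₂) * ((k:ℝ) - (n:ℝ)))
            * euclNorm ((Real.exp (-Λ₁ * ((k:ℝ) - (n:ℝ))) • Φ k n) *ᵥ v)
          ≤ Real.exp ((Λ₁ - Λ₂) * ((k:ℝ) - (n:ℝ)))
              * (K₁ * Real.exp (-αu₁ * ((n:ℝ) - (k:ℝ))) * euclNorm v) :=
            mul_le_mul_of_nonneg_left est (Real.exp_pos _).le
        _ = (Real.exp ((Λ₁ - Λ₂) * ((k:ℝ) - (n:ℝ))) * Real.exp (-αu₁ * ((n:ℝ) - (k:ℝ))))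
              * (K₁ * euclNorm v) := by ring
        _ ≤ 1 * (K₁ * euclNorm v) :=
            mul_le_mul_of_nonneg_right hprod (mul_nonneg hK₁.le (euclNorm_nonneg v))
        _ = K₁ * euclNorm v := one_mul _
    · -- via S₂ ⊆ S₁
      have S2 : ∀ n v, Ps₂ n *ᵥ v = v → Ps₁ n *ᵥ v = v := by
        intro n v hv
        refine (mem_stable_iff _ hco₁ hId₁ hED₁ n v).mpr ⟨K₂ * euclNorm v, fun k hk => ?_⟩
        have est := hED₂.2.2.2.2.2.1 k n hk v
        rw [hv] at est
        show euclNorm ((Real.exp (-Λ₁ * ((k:ℝ) - (n:ℝ))) • Φ k n) *ᵥ v) ≤ K₂ * euclNorm v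
        rw [norm_scaled_pair Φ Λ₂ Λ₁ k n v]
        have hkn : (0:ℝ) ≤ (k:ℝ) - (n:ℝ) := sub_nonneg.mpr (by exact_mod_cast hk)
        have hprod : Real.exp ((Λ₂ - Λ₁) * ((k:ℝ) - (n:ℝ)))
            * Real.exp (-αs₂ * ((k:ℝ) - (n:ℝ))) ≤ 1 := by
          rw [← Real.exp_add, Real.exp_le_one_iff]; nlinarith
        calc Real.exp ((Λ₂ - Λ₁) * ((k:ℝ) - (n:ℝ)))
              * euclNorm ((Real.exp (-Λ₂ * ((k:ℝ) - (n:ℝ))) • Φ k n) *ᵥ v)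
            ≤ Real.exp ((Λ₂ - Λ₁) * ((k:ℝ) - (n:ℝ)))
                * (K₂ * Real.exp (-αs₂ * ((k:ℝ) - (n:ℝ))) * euclNorm v) :=
              mul_le_mul_of_nonneg_left est (Real.exp_pos _).le
          _ = (Real.exp ((Λ₂ - Λ₁) * ((k:ℝ) - (n:ℝ))) * Real.exp (-αs₂ * ((k:ℝ) - (n:ℝ))))
                * (K₂ * euclNorm v) := by ring
          _ ≤ 1 * (K₂ * euclNorm v) :=
              mul_le_mul_of_nonneg_right hprod (mul_nonneg hK₂.le (euclNorm_nonneg v))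
          _ = K₂ * euclNorm v := one_mul _
      intro n v hv
      have hs : Ps₂ n *ᵥ (Ps₂ n *ᵥ v) = Ps₂ n *ᵥ v := by
        rw [Matrix.mulVec_mulVec, hED₂.2.2.2.1 n]
      have hs1 : Ps₁ n *ᵥ (Ps₂ n *ᵥ v) = Ps₂ n *ᵥ v := S2 n _ hs
      have hu : Ps₂ n *ᵥ (v - Ps₂ n *ᵥ v) = 0 := by
        rw [Matrix.mulVec_sub, Matrix.mulVec_mulVec, hED₂.2.2.2.1 n, sub_self]
      have hu1 : Ps₁ n *ᵥ (v - Ps₂ n *ᵥ v) = 0 := U2 n _ hu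
      rw [Matrix.mulVec_sub, hv, hs1, zero_sub, neg_eq_zero] at hu1
      rw [hu1]
  -- conclude equality of the projectors
  intro n
  apply mulVec_ext
  intro v
  have hs : Ps₁ n *ᵥ (Ps₁ n *ᵥ v) = Ps₁ n *ᵥ v := by
    rw [Matrix.mulVec_mulVec, hED₁.2.2.2.1 n]
  have h1 : Ps₂ n *ᵥ (Ps₁ n *ᵥ v) = Ps₁ n *ᵥ v := S1 n _ hs
  have hu : Ps₁ n *ᵥ (v - Ps₁ n *ᵥ v) = 0 := by
    rw [Matrix.mulVec_sub, Matrix.mulVec_mulVec, hED₁.2.2.2.1 n, sub_self]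
  have h2 : Ps₂ n *ᵥ (v - Ps₁ n *ᵥ v) = 0 := U1 n _ hu
  rw [Matrix.mulVec_sub, h1] at h2
  exact (sub_eq_zero.mp h2).symm

lemma chainAux {d : ℕ} (Φ : ℤ → ℤ → Matrix (Fin d) (Fin d) ℝ)
    (hco : ∀ n m k, Φ n m * Φ m k = Φ n k) (hId : ∀ n, Φ n n = 1)
    (a b : ℝ)
    (hres : ∀ Λ ∈ Set.Ioo a b, ∃ (K αs αu : ℝ) (Ps : ℤ → Matrix (Fin d) (Fin d) ℝ),
      IsED (fun n m => Real.exp (-Λ * ((n : ℝ) - (m : ℝ))) • Φ n m) K αs αu Ps)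
    (Λ₁ Λ₂ : ℝ) (hΛ₁ : Λ₁ ∈ Set.Ioo a b) (hΛ₂ : Λ₂ ∈ Set.Ioo a b)
    (K₁ αs₁ αu₁ K₂ αs₂ αu₂ : ℝ)
    (Ps₁ Ps₂ : ℤ → Matrix (Fin d) (Fin d) ℝ)
    (hle : Λ₁ ≤ Λ₂)
    (hED₁ : IsED (fun n m => Real.exp (-Λ₁ * ((n : ℝ) - (m : ℝ))) • Φ n m) K₁ αs₁ αu₁ Ps₁)
    (hED₂ : IsED (fun n m => Real.exp (-Λ₂ * ((n : ℝ) - (m : ℝ))) • Φ n m) K₂ αs₂ αu₂ Ps₂) :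
    ∀ n : ℤ, Ps₁ n = Ps₂ n := by
  classical
  obtain ⟨δ, g, hδpos, hg⟩ : ∃ (δ : ℝ → ℝ) (g : ℝ → ℤ → Matrix (Fin d) (Fin d) ℝ),
      (∀ μ ∈ Set.Ioo a b, 0 < δ μ) ∧
      (∀ μ ∈ Set.Ioo a b, ∃ K,
        IsED (fun (n m : ℤ) => Real.exp (-μ * ((n:ℝ) - (m:ℝ))) • Φ n m) K (δ μ) (δ μ) (g μ)) := by
    choose K' as' au' P' hP' using hres
    refine ⟨fun μ => if h : μ ∈ Set.Ioo a b then min (as' μ h) (au' μ h) else 1,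
            fun μ => if h : μ ∈ Set.Ioo a b then P' μ h else Ps₁, ?_, ?_⟩
    · intro μ h
      simp only [dif_pos h]
      exact lt_min (hP' μ h).2.1 (hP' μ h).2.2.1
    · intro μ h
      simp only [dif_pos h]
      exact ⟨K' μ h, IsED_mono (hP' μ h)
        (lt_min (hP' μ h).2.1 (hP' μ h).2.2.1) (min_le_left _ _) (min_le_right _ _)⟩
  have hloc : ∀ μ ν, μ ∈ Set.Ioo a b → ν ∈ Set.Ioo a b → μ ≤ ν →
      (ν - μ ≤ δ μ ∨ ν - μ ≤ δ ν) → ∀ n, g μ n = g ν n := by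
    intro μ ν hμ hν hle' hgap
    obtain ⟨Kμ, hKμ⟩ := hg μ hμ
    obtain ⟨Kν, hKν⟩ := hg ν hν
    exact keyAux Φ hco hId μ ν Kμ (δ μ) (δ μ) Kν (δ ν) (δ ν) (g μ) (g ν) hle' hgap hKμ hKν
  have hend₁ : ∀ n, g Λ₁ n = Ps₁ n := by
    obtain ⟨K, hK⟩ := hg Λ₁ hΛ₁
    exact keyAux Φ hco hId Λ₁ Λ₁ K (δ Λ₁) (δ Λ₁) K₁ αs₁ αu₁ (g Λ₁) Ps₁ le_rfl
      (Or.inl (by linarith [hδpos Λ₁ hΛ₁])) hK hED₁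
  have hend₂ : ∀ n, g Λ₂ n = Ps₂ n := by
    obtain ⟨K, hK⟩ := hg Λ₂ hΛ₂
    exact keyAux Φ hco hId Λ₂ Λ₂ K (δ Λ₂) (δ Λ₂) K₂ αs₂ αu₂ (g Λ₂) Ps₂ le_rfl
      (Or.inl (by linarith [hδpos Λ₂ hΛ₂])) hK hED₂
  have hsub : Set.Icc Λ₁ Λ₂ ⊆ Set.Ioo a b :=
    fun t ht => ⟨lt_of_lt_of_le hΛ₁.1 ht.1, lt_of_le_of_lt ht.2 hΛ₂.2⟩
  set T := {t : ℝ | t ∈ Set.Icc Λ₁ Λ₂ ∧ ∀ n, g t n = g Λ₁ n} with hT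
  have hΛ₁T : Λ₁ ∈ T := ⟨⟨le_rfl, hle⟩, fun n => rfl⟩
  have hne : T.Nonempty := ⟨Λ₁, hΛ₁T⟩
  have hbdd : BddAbove T := ⟨Λ₂, fun t ht => ht.1.2⟩
  set c := sSup T with hc
  have hc1 : Λ₁ ≤ c := le_csSup hbdd hΛ₁T
  have hc2 : c ≤ Λ₂ := csSup_le hne fun t ht => ht.1.2
  have hcI : c ∈ Set.Ioo a b := hsub ⟨hc1, hc2⟩
  have hcT : c ∈ T := by
    obtain ⟨t, htT, hlt⟩ := exists_lt_of_lt_csSup hne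
      (show c - δ c < sSup T by rw [← hc]; linarith [hδpos c hcI])
    have htc : t ≤ c := le_csSup hbdd htT
    have heq := hloc t c (hsub htT.1) hcI htc (Or.inr (by linarith))
    exact ⟨⟨hc1, hc2⟩, fun n => (heq n).symm.trans (htT.2 n)⟩
  have hceq : c = Λ₂ := by
    by_contra hne'
    have hclt : c < Λ₂ := lt_of_le_of_ne hc2 hne'
    have hcc' : c < min Λ₂ (c + δ c) := lt_min hclt (by linarith [hδpos c hcI])
    have hc'I : min Λ₂ (c + δ c) ∈ Set.Icc Λ₁ Λ₂ := ⟨le_trans hc1 hcc'.le, min_le_left _ _⟩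
    have hc'T : min Λ₂ (c + δ c) ∈ T := by
      have heq := hloc c (min Λ₂ (c + δ c)) hcI (hsub hc'I) hcc'.le
        (Or.inl (by linarith [min_le_right Λ₂ (c + δ c)]))
      exact ⟨hc'I, fun n => (heq n).symm.trans (hcT.2 n)⟩
    have := le_csSup hbdd hc'T
    rw [← hc] at this
    linarith
  intro n
  have hfin := hcT.2
  rw [hceq] at hfin
  calc Ps₁ n = g Λ₁ n := (hend₁ n).symm
    _ = g Λ₂ n := (hfin n).symm
    _ = Ps₂ n := hend₂ n

/-- if the scaled equation `w_{n+1} = e^{-Λ}Aₙwₙ` has an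
exponential dichotomy for every `Λ` in the open (resolvent) interval `(a,b)`,
then the dichotomy projectors are constant on `(a,b)`. -/
theorem stmt16 {d : ℕ} (A : ℤ → Matrix (Fin d) (Fin d) ℝ) (hA : ∀ n, IsUnit (A n))
    (Φ : ℤ → ℤ → Matrix (Fin d) (Fin d) ℝ)
    (hId : ∀ n, Φ n n = 1) (hstep : ∀ n m, Φ (n + 1) m = A n * Φ n m)
    (a b : ℝ)
    (hres : ∀ Λ ∈ Set.Ioo a b, ∃ (K αs αu : ℝ) (Ps : ℤ → Matrix (Fin d) (Fin d) ℝ),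
      IsED (fun n m => Real.exp (-Λ * ((n : ℝ) - (m : ℝ))) • Φ n m) K αs αu Ps)
    (Λ₁ Λ₂ : ℝ) (hΛ₁ : Λ₁ ∈ Set.Ioo a b) (hΛ₂ : Λ₂ ∈ Set.Ioo a b)
    (K₁ αs₁ αu₁ K₂ αs₂ αu₂ : ℝ)
    (Ps₁ Ps₂ : ℤ → Matrix (Fin d) (Fin d) ℝ)
    (hED₁ : IsED (fun n m => Real.exp (-Λ₁ * ((n : ℝ) - (m : ℝ))) • Φ n m) K₁ αs₁ αu₁ Ps₁)
    (hED₂ : IsED (fun n m => Real.exp (-Λ₂ * ((n : ℝ) - (m : ℝ))) • Φ n m) K₂ αs₂ αu₂ Ps₂) :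
    ∀ n : ℤ, Ps₁ n = Ps₂ n := by
  have hco := cocycle_of_step A hA Φ hId hstep
  rcases le_total Λ₁ Λ₂ with h | h
  · exact chainAux Φ hco hId a b hres Λ₁ Λ₂ hΛ₁ hΛ₂ K₁ αs₁ αu₁ K₂ αs₂ αu₂ Ps₁ Ps₂ h hED₁ hED₂
  · intro n
    exact (chainAux Φ hco hId a b hres Λ₂ Λ₁ hΛ₂ hΛ₁ K₂ αs₂ αu₂ K₁ αs₁ αu₁ Ps₂ Ps₁ h hED₂ hED₁ n).symm
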